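/- Let M be a d×d complex matrix and ρ > 0 a real number such that ρ is an eigenvalue of M and every eigenvalue λ ≠ ρ of M satisfies |λ| < ρ. Let r ≥ 1 be the multiplicity of ρ as a root of the minimal polynomial of M (equivalently, the size of the largest Jordan block of M for the eigenvalue ρ). Then the matrices ((r−1)!/(n^{r−1} ρ^{n−r+1})) · M^n converge as n → ∞ to a nonzero matrix P satisfying M P = P M = ρ P. -/

import Mathlib

open Filter Topology Polynomial Finset

attribute [local instance] Matrix.linftyOpNormedRing Matrix.linftyOpNormedSpace

lemma stmt6_growth_bound {d : ℕ} (M : Matrix (Fin d) (Fin d) ℂ) (ρ' : ℝ) (hρ' : 0 < ρ')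
    (s : List ℂ) (hs : ∀ μ ∈ s, ‖μ‖ ≤ ρ') :
    ∀ Q : Matrix (Fin d) (Fin d) ℂ, (s.map (fun μ => M - μ • 1)).prod * Q = 0 →
      ∃ C : ℝ, 0 ≤ C ∧ ∀ n : ℕ, ‖M ^ n * Q‖ ≤ C * (n + 1) ^ s.length * ρ' ^ n := by
  induction s with
  | nil =>
    intro Q hQ
    simp only [List.map_nil, List.prod_nil, one_mul] at hQ
    exact ⟨0, le_refl 0, fun n => by rw [hQ, mul_zero, norm_zero]; positivity⟩
  | cons a t ih =>
    intro Q hQ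
    have hcomm : ∀ μ : ℂ, Commute (M - a • 1) (M - μ • 1) := fun μ =>
      (((Commute.refl M).sub_right ((Commute.one_right M).smul_right μ)).sub_left
        ((((Commute.one_left M).smul_left a).sub_right
          (((Commute.refl (1 : Matrix (Fin d) (Fin d) ℂ)).smul_left a).smul_right μ))))
    have hcp : Commute (M - a • 1) ((t.map (fun μ => M - μ • 1)).prod) := by
      apply Commute.list_prod_right
      intro x hx
      obtain ⟨μ, hμ, rfl⟩ := List.mem_map.mp hx
      exact hcomm μ
    have hQ' : (t.map (fun μ => M - μ • 1)).prod * ((M - a • 1) * Q) = 0 := by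
      rw [← mul_assoc, ← hcp.eq, mul_assoc]
      simpa [List.prod_cons, mul_assoc] using hQ
    obtain ⟨C1, hC10, hC1⟩ := ih (fun μ hμ => hs μ (List.mem_cons_of_mem a hμ)) _ hQ'
    refine ⟨‖Q‖ + C1 / ρ', by positivity, fun n => ?_⟩
    set C : ℝ := ‖Q‖ + C1 / ρ' with hC
    have hCρ : C1 ≤ C * ρ' := by
      rw [hC, add_mul, div_mul_cancel₀ _ (ne_of_gt hρ')]
      nlinarith [norm_nonneg Q]
    induction n with
    | zero =>
      simp only [pow_zero, one_mul, Nat.cast_zero, zero_add, one_pow, mul_one]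
      rw [hC]
      nlinarith [norm_nonneg Q, div_nonneg hC10 (le_of_lt hρ')]
    | succ n ihn =>
      have hrec : M ^ (n + 1) * Q = M ^ n * ((M - a • 1) * Q) + a • (M ^ n * Q) := by
        have hMQ : M * Q = (M - a • 1) * Q + a • Q := by
          rw [sub_mul, smul_mul_assoc, one_mul]
          abel
        rw [pow_succ, mul_assoc, hMQ, mul_add, mul_smul_comm]
      have h1 : ‖M ^ (n+1) * Q‖ ≤ ‖M ^ n * ((M - a • 1) * Q)‖ + ‖a‖ * ‖M ^ n * Q‖ := by
        rw [hrec]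
        refine (norm_add_le _ _).trans ?_
        gcongr
        rw [norm_smul]
      have h2 : ‖M ^ n * ((M - a • 1) * Q)‖ ≤ C1 * (n+1) ^ t.length * ρ' ^ n := hC1 n
      have ha : ‖a‖ ≤ ρ' := hs a List.mem_cons_self
      have h3 : ‖a‖ * ‖M ^ n * Q‖ ≤ ρ' * (C * (n+1) ^ (t.length + 1) * ρ' ^ n) := by
        have := mul_le_mul ha ihn (norm_nonneg _) (le_of_lt hρ')
        simpa [List.length_cons] using this
      have hkey : ((n:ℝ)+1) ^ (t.length+1) + ((n:ℝ)+1) ^ t.length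
          ≤ (((n:ℝ)+1)+1) ^ (t.length + 1) := by
        have h4 : ((n:ℝ)+1) ^ t.length * (((n:ℝ)+1)+1) ≤ (((n:ℝ)+1)+1) ^ (t.length + 1) := by
          rw [pow_succ]
          exact mul_le_mul_of_nonneg_right
            (pow_le_pow_left₀ (by positivity) (by linarith) _) (by linarith)
        have heq : ((n:ℝ)+1) ^ (t.length+1) + ((n:ℝ)+1) ^ t.length
            = ((n:ℝ)+1) ^ t.length * (((n:ℝ)+1)+1) := by ring
        rw [heq]
        exact h4
      have hpos : (0:ℝ) ≤ ((n:ℝ)+1) ^ t.length * ρ' ^ n := by positivity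
      calc ‖M ^ (n+1) * Q‖
          ≤ C1 * ((n:ℝ)+1) ^ t.length * ρ' ^ n + ρ' * (C * ((n:ℝ)+1) ^ (t.length+1) * ρ' ^ n) := by
            push_cast at h2 h3 ⊢
            linarith
        _ ≤ C * ρ' * ((n:ℝ)+1) ^ t.length * ρ' ^ n
            + ρ' * (C * ((n:ℝ)+1) ^ (t.length+1) * ρ' ^ n) := by
            gcongr
        _ = C * ρ' ^ (n+1) * (((n:ℝ)+1) ^ (t.length+1) + ((n:ℝ)+1) ^ t.length) := by ring
        _ ≤ C * ρ' ^ (n+1) * ((((n:ℝ)+1)+1) ^ (t.length + 1)) := by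
            have hC0 : (0:ℝ) ≤ C := by positivity
            have := mul_le_mul_of_nonneg_left hkey
              (mul_nonneg hC0 (pow_nonneg (le_of_lt hρ') (n+1)))
            linarith
        _ = C * (((n+1 : ℕ):ℝ) + 1) ^ (List.length (a :: t)) * ρ' ^ (n+1) := by
            push_cast [List.length_cons]
            ring

lemma stmt6_inv_nat_tendsto : Tendsto (fun n : ℕ => ((n:ℂ))⁻¹) atTop (𝓝 0) := by
  have h : Tendsto (fun n : ℕ => ((n:ℝ))⁻¹) atTop (𝓝 0) :=
    tendsto_inv_atTop_zero.comp tendsto_natCast_atTop_atTop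
  have h2 := (Complex.continuous_ofReal.tendsto 0).comp h
  simp only [Complex.ofReal_zero] at h2
  refine h2.congr fun n => ?_
  simp [Function.comp]

lemma stmt6_choose_lim (k : ℕ) :
    Tendsto (fun n : ℕ => ((k.factorial * n.choose k : ℕ) : ℂ) / (n : ℂ) ^ k) atTop (𝓝 1) := by
  have hlim : Tendsto (fun n : ℕ => ∏ i ∈ range k, (1 - (i:ℂ)/(n:ℂ))) atTop (𝓝 1) := by
    have : Tendsto (fun n : ℕ => ∏ i ∈ range k, (1 - (i:ℂ)/(n:ℂ))) atTop
        (𝓝 (∏ i ∈ range k, (1 - 0 : ℂ))) := by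
      refine tendsto_finset_prod _ (fun i _ => ?_)
      have : Tendsto (fun n : ℕ => (i:ℂ)/(n:ℂ)) atTop (𝓝 0) := by
        simpa [div_eq_mul_inv] using stmt6_inv_nat_tendsto.const_mul (i:ℂ)
      simpa using (tendsto_const_nhds (x := (1:ℂ))).sub this
    simpa using this
  refine hlim.congr' ?_
  filter_upwards [eventually_ge_atTop (max k 1)] with n hn
  have hk : k ≤ n := le_trans (le_max_left _ _) hn
  have hn0 : (n:ℂ) ≠ 0 := by
    have : 1 ≤ n := le_trans (le_max_right _ _) hn
    exact_mod_cast Nat.cast_ne_zero.mpr (by omega)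
  rw [← Nat.descFactorial_eq_factorial_mul_choose, Nat.descFactorial_eq_prod_range,
    Nat.cast_prod]
  have hcast : ∀ i ∈ range k, ((n - i : ℕ) : ℂ) = (n:ℂ) - (i:ℂ) := by
    intro i hi
    have : i ≤ n := le_trans (le_of_lt (mem_range.mp hi)) hk
    push_cast [this]
    ring
  rw [Finset.prod_congr rfl hcast]
  have hpow : (n:ℂ) ^ k = ∏ _i ∈ range k, (n:ℂ) := by
    rw [Finset.prod_const, card_range]
  rw [hpow, ← Finset.prod_div_distrib]
  refine (Finset.prod_congr rfl fun i _ => ?_).symm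
  field_simp

/-- if `ρ > 0` is an eigenvalue of the complex matrix `M`, strictly dominating
all other eigenvalues in modulus, and `r` is the multiplicity of `ρ` as a root of the minimal
polynomial of `M`, then `((r-1)!/(n^{r-1} ρ^{n-r+1})) • M^n` converges to a nonzero matrix `P`
with `M P = P M = ρ P`. -/
theorem stmt6 {d : ℕ} (M : Matrix (Fin d) (Fin d) ℂ) (ρ : ℝ) (hρ : 0 < ρ)
    (heig : M.charpoly.IsRoot (ρ : ℂ))
    (hmax : ∀ μ : ℂ, M.charpoly.IsRoot μ → μ ≠ (ρ : ℂ) → ‖μ‖ < ρ)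
    (r : ℕ) (hr1 : 1 ≤ r)
    (hr : r = Polynomial.rootMultiplicity (ρ : ℂ) (minpoly ℂ M)) :
    ∃ P : Matrix (Fin d) (Fin d) ℂ, P ≠ 0 ∧ M * P = (ρ : ℂ) • P ∧ P * M = (ρ : ℂ) • P ∧
      Tendsto
        (fun n : ℕ =>
          (((Nat.factorial (r - 1) : ℂ)) / ((n : ℂ) ^ (r - 1) * (ρ : ℂ) ^ ((n : ℤ) - r + 1))) •
            M ^ n)
        atTop (𝓝 P) := by
  classical
  obtain ⟨r', rfl⟩ : ∃ r', r = r' + 1 := ⟨r - 1, (Nat.succ_pred_eq_of_pos hr1).symm⟩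
  simp only [Nat.add_sub_cancel]
  have hρc0 : (ρ : ℂ) ≠ 0 := by
    exact_mod_cast ne_of_gt hρ
  set m : ℂ[X] := minpoly ℂ M with hm
  have hm0 : m ≠ 0 := minpoly.ne_zero (Matrix.isIntegral M)
  set q : ℂ[X] := m /ₘ (X - C (ρ:ℂ)) ^ (r'+1) with hqdef
  have hfac : (X - C (ρ:ℂ)) ^ (r'+1) * q = m := by
    have h := Polynomial.pow_mul_divByMonic_rootMultiplicity_eq m (ρ:ℂ)
    rw [← hr] at h
    rw [hqdef]
    exact h
  have hqρ : q.eval (ρ:ℂ) ≠ 0 := by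
    have h := Polynomial.eval_divByMonic_pow_rootMultiplicity_ne_zero (ρ:ℂ) hm0
    rw [← hr] at h
    rw [hqdef]
    exact h
  have hq0 : q ≠ 0 := fun h => hm0 (by rw [← hfac, h, mul_zero])
  have hXne : (X - C (ρ:ℂ)) ≠ (0 : ℂ[X]) := X_sub_C_ne_zero (ρ:ℂ)
  have hnd : ¬ (X - C (ρ:ℂ)) ∣ q := by
    rw [dvd_iff_isRoot]
    exact hqρ
  have hcop : IsCoprime ((X - C (ρ:ℂ)) ^ (r'+1)) q :=
    (((irreducible_X_sub_C (ρ:ℂ)).coprime_iff_not_dvd.mpr hnd)).pow_left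
  obtain ⟨u, v, huv⟩ := hcop
  set N : Matrix (Fin d) (Fin d) ℂ := M - (ρ:ℂ) • 1 with hN
  have haevalX : aeval M (X - C (ρ:ℂ)) = N := by
    rw [map_sub, aeval_X, aeval_C, Algebra.algebraMap_eq_smul_one]
  have hmin : aeval M m = 0 := minpoly.aeval ℂ M
  have hzero : ∀ w : ℂ[X], aeval M (w * m) = 0 := fun w => by rw [map_mul, hmin, mul_zero]
  set E : Matrix (Fin d) (Fin d) ℂ := aeval M (v * q) with hE
  set QQ : Matrix (Fin d) (Fin d) ℂ := aeval M (u * (X - C (ρ:ℂ)) ^ (r'+1)) with hQQ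
  have hEQ : QQ + E = 1 := by
    rw [hQQ, hE, ← map_add, huv, map_one]
  set P : Matrix (Fin d) (Fin d) ℂ := aeval M ((X - C (ρ:ℂ)) ^ r' * (v * q)) with hP
  have hPNE : P = N ^ r' * E := by rw [hP, map_mul, map_pow, haevalX, hE]
  have hNrE : N ^ (r'+1) * E = 0 := by
    have hid : (X - C (ρ:ℂ)) ^ (r'+1) * (v * q) = v * m := by
      rw [← hfac]; ring
    calc N ^ (r'+1) * E = aeval M ((X - C (ρ:ℂ)) ^ (r'+1) * (v * q)) := by
          rw [map_mul, map_pow, haevalX, hE]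
      _ = 0 := by rw [hid, hzero]
  -- P ≠ 0
  have hT : aeval M ((X - C (ρ:ℂ)) ^ r' * q) ≠ 0 := by
    intro h
    have hne : (X - C (ρ:ℂ)) ^ r' * q ≠ 0 := mul_ne_zero (pow_ne_zero _ hXne) hq0
    have hdeg := minpoly.degree_le_of_ne_zero ℂ M hne h
    have h1 := Polynomial.natDegree_le_natDegree hdeg
    have h2 : m.natDegree = (r'+1) + q.natDegree := by
      rw [← hfac, natDegree_mul (pow_ne_zero _ hXne) hq0, natDegree_pow, natDegree_X_sub_C,
        mul_one]
    have h3 : ((X - C (ρ:ℂ)) ^ r' * q).natDegree = r' + q.natDegree := by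
      rw [natDegree_mul (pow_ne_zero _ hXne) hq0, natDegree_pow, natDegree_X_sub_C, mul_one]
    rw [← hm, h2, h3] at h1
    omega
  have hPq : P * aeval M q = aeval M ((X - C (ρ:ℂ)) ^ r' * q) := by
    rw [hP, ← map_mul]
    have hid : (X - C (ρ:ℂ)) ^ r' * (v * q) * q
        = (X - C (ρ:ℂ)) ^ r' * q - (u * (X - C (ρ:ℂ)) ^ r') * ((X - C (ρ:ℂ)) ^ (r'+1) * q) := by
      linear_combination ((X - C (ρ:ℂ)) ^ r' * q) * huv
    rw [hid, hfac, map_sub, hzero, sub_zero]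
  have hP0 : P ≠ 0 := fun h => hT (by rw [← hPq, h, zero_mul])
  -- M P = ρ P and P M = ρ P
  have hM' : M = N + (ρ:ℂ) • 1 := by rw [hN, sub_add_cancel]
  have hNP : N * P = 0 := by
    have hid : (X - C (ρ:ℂ)) * ((X - C (ρ:ℂ)) ^ r' * (v * q)) = v * m := by
      rw [← hfac]; ring
    rw [← haevalX, hP, ← map_mul, hid, hzero]
  have hPN : P * N = 0 := by
    have hid : ((X - C (ρ:ℂ)) ^ r' * (v * q)) * (X - C (ρ:ℂ)) = v * m := by
      rw [← hfac]; ring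
    rw [← haevalX, hP, ← map_mul, hid, hzero]
  have hMP : M * P = (ρ:ℂ) • P := by
    rw [hM', add_mul, hNP, zero_add, smul_mul_assoc, one_mul]
  have hPM : P * M = (ρ:ℂ) • P := by
    rw [hM', mul_add, hPN, zero_add, mul_smul_comm, mul_one]
  refine ⟨P, hP0, hMP, hPM, ?_⟩
  set sc : ℕ → ℂ := fun n : ℕ =>
    ((Nat.factorial r' : ℂ)) / ((n : ℂ) ^ r' * (ρ : ℂ) ^ ((n : ℤ) - ((r'+1 : ℕ) : ℤ) + 1))
    with hsc
  show Tendsto (fun n : ℕ => sc n • M ^ n) atTop (𝓝 P)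
  -- coefficient simplification
  have hcoef : ∀ k, k ≤ r' → ∀ n : ℕ, r'+1 ≤ n →
      sc n * (ρ:ℂ) ^ (n-k) * (n.choose k : ℂ)
      = ((Nat.factorial r' : ℂ) * (ρ:ℂ) ^ (r'-k) * (n.choose k : ℂ)) / (n:ℂ) ^ r' := by
    intro k hk n hn
    have hn0 : (n:ℂ) ≠ 0 := Nat.cast_ne_zero.mpr (by omega)
    have hzp : ((ρ:ℂ)) ^ ((n:ℤ) - ((r'+1:ℕ):ℤ) + 1) ≠ 0 := zpow_ne_zero _ hρc0
    have hzpow : (ρ:ℂ) ^ ((n:ℤ) - ((r'+1:ℕ):ℤ) + 1) * (ρ:ℂ) ^ ((r'-k : ℕ))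
        = (ρ:ℂ) ^ ((n-k : ℕ)) := by
      rw [← zpow_natCast (ρ:ℂ) (r'-k), ← zpow_natCast (ρ:ℂ) (n-k), ← zpow_add₀ hρc0]
      congr 1
      omega
    rw [hsc]
    rw [div_mul_eq_mul_div, div_mul_eq_mul_div,
      div_eq_div_iff (mul_ne_zero (pow_ne_zero _ hn0) hzp) (pow_ne_zero _ hn0), ← hzpow]
    ring
  -- A part: the E component
  have hcommN : Commute N ((ρ:ℂ) • (1 : Matrix (Fin d) (Fin d) ℂ)) :=
    (Commute.one_right N).smul_right _
  have hcastM : ∀ c : ℕ, ((c : ℕ) : Matrix (Fin d) (Fin d) ℂ) = ((c : ℂ)) • 1 := by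
    intro c
    rw [← map_natCast (algebraMap ℂ (Matrix (Fin d) (Fin d) ℂ)) c,
      Algebra.algebraMap_eq_smul_one]
  have hMn : ∀ n : ℕ, M ^ n
      = ∑ k ∈ range (n+1), ((ρ:ℂ) ^ (n-k) * (n.choose k : ℂ)) • N ^ k := by
    intro n
    rw [hM', hcommN.add_pow]
    refine Finset.sum_congr rfl fun k hk => ?_
    rw [_root_.smul_pow, one_pow, hcastM (n.choose k)]
    rw [mul_smul_comm, mul_smul_comm, mul_one, mul_one, smul_smul]
    congr 1
    ring
  have hNkE : ∀ k, r'+1 ≤ k → N ^ k * E = 0 := by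
    intro k hk
    obtain ⟨j, rfl⟩ := Nat.exists_eq_add_of_le hk
    rw [add_comm (r'+1) j, pow_add, mul_assoc, hNrE, mul_zero]
  have hAeq : ∀ n : ℕ, r'+1 ≤ n → sc n • (M ^ n * E)
      = ∑ k ∈ range (r'+1), (sc n * (ρ:ℂ) ^ (n-k) * (n.choose k : ℂ)) • (N ^ k * E) := by
    intro n hn
    rw [hMn n, Finset.sum_mul, Finset.smul_sum]
    rw [← Finset.sum_subset (Finset.range_subset_range.mpr (by omega : r'+1 ≤ n+1))]
    · refine Finset.sum_congr rfl fun k hk => ?_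
      rw [smul_mul_assoc, smul_smul, mul_assoc]
    · intro k hk1 hk2
      have hk : r'+1 ≤ k := by
        simp only [mem_range, not_lt] at hk2
        exact hk2
      rw [smul_mul_assoc, hNkE k hk, smul_zero, smul_zero]
  have hck : ∀ k ∈ range (r'+1),
      Tendsto (fun n : ℕ => sc n * (ρ:ℂ) ^ (n-k) * (n.choose k : ℂ)) atTop
        (𝓝 (if k = r' then 1 else 0)) := by
    intro k hkmem
    have hk : k ≤ r' := by
      simp only [mem_range] at hkmem
      omega
    have hev : ∀ᶠ n : ℕ in atTop, sc n * (ρ:ℂ) ^ (n-k) * (n.choose k : ℂ)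
        = ((Nat.factorial r' : ℂ) * (ρ:ℂ) ^ (r'-k) * (n.choose k : ℂ)) / (n:ℂ) ^ r' := by
      filter_upwards [eventually_ge_atTop (r'+1)] with n hn
      exact hcoef k hk n hn
    refine Tendsto.congr' (by filter_upwards [hev] with n h using h.symm) ?_
    by_cases hkr : k = r'
    · subst hkr
      simp only [if_pos rfl, Nat.sub_self, pow_zero, mul_one]
      have := stmt6_choose_lim k
      refine this.congr fun n => ?_
      push_cast
      ring
    · simp only [if_neg hkr]
      have hklt : k < r' := lt_of_le_of_ne hk hkr
      refine squeeze_zero_norm'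
        (a := fun n : ℕ => ((Nat.factorial r' : ℝ) * ρ ^ (r'-k)) * ((n:ℝ))⁻¹) ?_ ?_
      · filter_upwards [eventually_ge_atTop 1] with n hn
        have hn0 : (0:ℝ) < (n:ℝ) := by exact_mod_cast hn
        have hnorm : ‖((Nat.factorial r' : ℂ) * (ρ:ℂ) ^ (r'-k) * (n.choose k : ℂ)) / (n:ℂ) ^ r'‖
            = ((Nat.factorial r' : ℝ) * ρ ^ (r'-k) * (n.choose k : ℝ)) / (n:ℝ) ^ r' := by
          rw [norm_div, norm_mul, norm_mul, norm_pow, norm_pow]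
          simp [Complex.norm_natCast, Complex.norm_real, abs_of_pos hρ, abs_of_pos hn0]
        rw [hnorm]
        have hchoose : (n.choose k : ℝ) ≤ (n:ℝ) ^ k := by
          calc (n.choose k : ℝ) ≤ (n:ℝ) ^ k / (Nat.factorial k : ℝ) :=
                Nat.choose_le_pow_div k n
            _ ≤ (n:ℝ) ^ k := by
                rw [div_le_iff₀ (by positivity)]
                nlinarith [pow_nonneg (le_of_lt hn0) k,
                  (by exact_mod_cast Nat.one_le_iff_ne_zero.mpr (Nat.factorial_ne_zero k) :
                    (1:ℝ) ≤ (Nat.factorial k : ℝ))]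
        have hpowsplit : (n:ℝ) ^ r' = (n:ℝ) ^ k * (n:ℝ) ^ (r' - k) := by
          rw [← pow_add]
          congr 1
          omega
        have hge : (n:ℝ) ≤ (n:ℝ) ^ (r' - k) := by
          calc (n:ℝ) = (n:ℝ) ^ 1 := (pow_one _).symm
            _ ≤ (n:ℝ) ^ (r' - k) := by
                apply pow_le_pow_right₀ (by exact_mod_cast hn)
                omega
        have hA0 : (0:ℝ) ≤ (Nat.factorial r' : ℝ) * ρ ^ (r'-k) := by positivity
        rw [div_le_iff₀ (by positivity), hpowsplit]
        calc (Nat.factorial r' : ℝ) * ρ ^ (r'-k) * (n.choose k : ℝ)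
            ≤ (Nat.factorial r' : ℝ) * ρ ^ (r'-k) * (n:ℝ) ^ k := by
              exact mul_le_mul_of_nonneg_left hchoose hA0
          _ = ((Nat.factorial r' : ℝ) * ρ ^ (r'-k)) * (n:ℝ)⁻¹ * ((n:ℝ) ^ k * (n:ℝ)) := by
              field_simp
          _ ≤ ((Nat.factorial r' : ℝ) * ρ ^ (r'-k)) * (n:ℝ)⁻¹ * ((n:ℝ) ^ k * (n:ℝ) ^ (r'-k)) := by
              have h0 : (0:ℝ) ≤ ((Nat.factorial r' : ℝ) * ρ ^ (r'-k)) * (n:ℝ)⁻¹ := by positivity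
              have h1 : (n:ℝ) ^ k * (n:ℝ) ≤ (n:ℝ) ^ k * (n:ℝ) ^ (r'-k) :=
                mul_le_mul_of_nonneg_left hge (by positivity)
              exact mul_le_mul_of_nonneg_left h1 h0
      · have h : Tendsto (fun n : ℕ => ((n:ℝ))⁻¹) atTop (𝓝 0) :=
          tendsto_inv_atTop_zero.comp tendsto_natCast_atTop_atTop
        have := h.const_mul ((Nat.factorial r' : ℝ) * ρ ^ (r'-k))
        simpa using this
  have hAlim : Tendsto (fun n : ℕ => sc n • (M ^ n * E)) atTop (𝓝 P) := by
    have hsum : Tendsto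
        (fun n : ℕ => ∑ k ∈ range (r'+1),
          (sc n * (ρ:ℂ) ^ (n-k) * (n.choose k : ℂ)) • (N ^ k * E)) atTop
        (𝓝 (∑ k ∈ range (r'+1), (if k = r' then (1:ℂ) else 0) • (N ^ k * E))) := by
      refine tendsto_finset_sum _ fun k hk => ?_
      exact (hck k hk).smul_const _
    have hval : (∑ k ∈ range (r'+1), (if k = r' then (1:ℂ) else 0) • (N ^ k * E)) = P := by
      rw [hPNE]
      simp only [ite_smul, one_smul, zero_smul]
      rw [Finset.sum_ite_eq' (range (r'+1)) r' (fun k => N ^ k * E)]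
      simp
    rw [hval] at hsum
    refine hsum.congr' ?_
    filter_upwards [eventually_ge_atTop (r'+1)] with n hn
    exact (hAeq n hn).symm
  -- B part: the QQ component
  have hqQQ0 : ((q.roots.toList).map (fun μ => M - μ • 1)).prod * QQ = 0 := by
    have hc0 : q.leadingCoeff ≠ 0 := leadingCoeff_ne_zero.mpr hq0
    have h1 : aeval M q * QQ = 0 := by
      rw [hQQ, ← map_mul]
      have hid : q * (u * (X - C (ρ:ℂ)) ^ (r'+1)) = u * m := by
        rw [← hfac]; ring
      rw [hid, hzero]
    have hsplitq : q = C q.leadingCoeff * ((q.roots.toList).map (fun a => X - C a)).prod := by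
      have hlp : ((q.roots.toList).map (fun a => X - C a)).prod
          = (q.roots.map (fun a => X - C a)).prod := by
        conv_rhs => rw [← Multiset.coe_toList q.roots]
        rw [Multiset.map_coe, Multiset.prod_coe]
      rw [hlp]
      exact (IsAlgClosed.splits q).eq_prod_roots
    have haevalprod : aeval M (((q.roots.toList).map fun a => X - C a)).prod
        = ((q.roots.toList).map (fun μ => M - μ • 1)).prod := by
      rw [map_list_prod, List.map_map]
      congr 1
      refine List.map_congr_left fun a _ => ?_
      show aeval M (X - C a) = M - a • 1
      rw [map_sub, aeval_X, aeval_C, Algebra.algebraMap_eq_smul_one]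
    have h2 : aeval M q = q.leadingCoeff • ((q.roots.toList).map (fun μ => M - μ • 1)).prod := by
      conv_lhs => rw [hsplitq]
      rw [map_mul, aeval_C, haevalprod, Algebra.algebraMap_eq_smul_one, smul_mul_assoc, one_mul]
    rw [h2, smul_mul_assoc] at h1
    exact (smul_eq_zero.mp h1).resolve_left hc0
  have hroots_lt : ∀ μ ∈ q.roots.toList, ‖μ‖ < ρ := by
    intro μ hμ
    have hμroot : μ ∈ q.roots := by
      rw [← Multiset.mem_toList]
      exact hμ
    have hq' : q.eval μ = 0 := (Polynomial.mem_roots hq0).mp hμroot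
    have hmroot : m.IsRoot μ := by
      show m.eval μ = 0
      rw [← hfac, eval_mul, hq', mul_zero]
    have hchar : M.charpoly.IsRoot μ := hmroot.dvd (Matrix.minpoly_dvd_charpoly M)
    have hne : μ ≠ (ρ:ℂ) := by
      intro h
      rw [h] at hq'
      exact hqρ hq'
    exact hmax μ hchar hne
  obtain ⟨ρ', hρ'0, hρ'ρ, hρ'le⟩ :
      ∃ ρ' : ℝ, 0 < ρ' ∧ ρ' < ρ ∧ ∀ μ ∈ q.roots.toList, ‖μ‖ ≤ ρ' := by
    refine ⟨(insert (ρ/2) ((q.roots.toList).toFinset.image (fun μ : ℂ => ‖μ‖))).max'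
      (Finset.insert_nonempty _ _), ?_, ?_, ?_⟩
    · have := Finset.le_max' (insert (ρ/2) ((q.roots.toList).toFinset.image (fun μ : ℂ => ‖μ‖)))
        (ρ/2) (Finset.mem_insert_self _ _)
      linarith
    · rw [Finset.max'_lt_iff]
      intro b hb
      rcases Finset.mem_insert.mp hb with h | h
      · rw [h]; linarith
      · obtain ⟨μ, hμ, rfl⟩ := Finset.mem_image.mp h
        exact hroots_lt μ (List.mem_toFinset.mp hμ)
    · intro μ hμ
      exact Finset.le_max' _ _
        (Finset.mem_insert_of_mem (Finset.mem_image_of_mem _ (List.mem_toFinset.mpr hμ)))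
  obtain ⟨Cb, hCb0, hCb⟩ := stmt6_growth_bound M ρ' hρ'0 (q.roots.toList) hρ'le QQ hqQQ0
  set ll : ℕ := (q.roots.toList).length with hll
  have hBlim : Tendsto (fun n : ℕ => sc n • (M ^ n * QQ)) atTop (𝓝 0) := by
    set x : ℝ := ρ' / ρ with hx
    have hx0 : 0 < x := div_pos hρ'0 hρ
    have hx1 : x < 1 := (div_lt_one hρ).mpr hρ'ρ
    have hgeo : Tendsto (fun n : ℕ => (((n:ℝ))+1) ^ ll * x ^ n) atTop (𝓝 0) := by
      have h0 := tendsto_pow_const_mul_const_pow_of_lt_one ll hx0.le hx1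
      have h1 := h0.comp (tendsto_add_atTop_nat 1)
      have h2 := h1.const_mul (x⁻¹)
      rw [mul_zero] at h2
      refine h2.congr fun n => ?_
      show x⁻¹ * (((n+1 : ℕ):ℝ) ^ ll * x ^ (n+1)) = ((n:ℝ)+1) ^ ll * x ^ n
      push_cast
      rw [pow_succ]
      field_simp
    have hK : Tendsto (fun n : ℕ =>
        ((Nat.factorial r' : ℝ) * ρ ^ r' * Cb) * ((((n:ℝ))+1) ^ ll * x ^ n)) atTop (𝓝 0) := by
      have := hgeo.const_mul ((Nat.factorial r' : ℝ) * ρ ^ r' * Cb)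
      simpa using this
    refine squeeze_zero_norm' ?_ hK
    filter_upwards [eventually_ge_atTop 1] with n hn
    have hn0 : (0:ℝ) < (n:ℝ) := by exact_mod_cast hn
    have hscnorm : ‖sc n‖ ≤ (Nat.factorial r' : ℝ) * ρ ^ r' / ρ ^ n := by
      have heq : ‖sc n‖ = (Nat.factorial r' : ℝ) / ((n:ℝ) ^ r' * ρ ^ ((n:ℤ) - ((r'+1:ℕ):ℤ) + 1)) := by
        rw [hsc]
        rw [norm_div, norm_mul, norm_pow]
        simp only [Complex.norm_natCast]
        congr 2
        rw [← Complex.ofReal_zpow]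
        rw [Complex.norm_real]
        exact abs_of_pos (zpow_pos hρ _)
      rw [heq]
      have hz : ρ ^ ((n:ℤ) - ((r'+1:ℕ):ℤ) + 1) = ρ ^ (n:ℤ) * ρ ^ (-(r' : ℤ)) := by
        rw [← zpow_add₀ (ne_of_gt hρ)]
        congr 1
        push_cast
        ring
      have hzn : ρ ^ (n:ℤ) = ρ ^ n := zpow_natCast ρ n
      have hone : (1:ℝ) ≤ (n:ℝ) ^ r' := one_le_pow₀ (by exact_mod_cast hn)
      rw [hz, hzn, zpow_neg, zpow_natCast]
      rw [div_le_div_iff₀ (by positivity) (by positivity)]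
      calc (Nat.factorial r' : ℝ) * ρ ^ n
          = (Nat.factorial r' : ℝ) * (ρ ^ n * (ρ ^ r')⁻¹ * ρ ^ r') := by
            field_simp
        _ ≤ (Nat.factorial r' : ℝ) * ρ ^ r' * ((n:ℝ) ^ r' * (ρ ^ n * (ρ ^ r')⁻¹)) := by
            rw [mul_comm]
            have h0 : (0:ℝ) ≤ ρ ^ n * (ρ ^ r')⁻¹ := by positivity
            have := mul_le_mul_of_nonneg_right hone
              (by positivity : (0:ℝ) ≤ ρ ^ n * (ρ ^ r')⁻¹ * (Nat.factorial r' : ℝ) * ρ ^ r')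
            nlinarith [(Nat.cast_pos (α := ℝ)).mpr (Nat.factorial_pos r'),
              pow_pos hρ n, pow_pos hρ r', pow_pos hn0 r']
    have hnorm1 : ‖sc n • (M ^ n * QQ)‖ = ‖sc n‖ * ‖M ^ n * QQ‖ := norm_smul _ _
    rw [hnorm1]
    have hMQ := hCb n
    calc ‖sc n‖ * ‖M ^ n * QQ‖
        ≤ ((Nat.factorial r' : ℝ) * ρ ^ r' / ρ ^ n) * (Cb * ((n:ℝ)+1) ^ ll * ρ' ^ n) := by
          exact mul_le_mul hscnorm hMQ (norm_nonneg _) (by positivity)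
      _ = ((Nat.factorial r' : ℝ) * ρ ^ r' * Cb) * (((n:ℝ)+1) ^ ll * x ^ n) := by
          rw [hx, div_pow]
          field_simp
  have hsplit : ∀ n : ℕ, sc n • M ^ n = sc n • (M ^ n * QQ) + sc n • (M ^ n * E) := by
    intro n
    rw [← smul_add, ← mul_add, hEQ, mul_one]
  have hfinal := hBlim.add hAlim
  rw [zero_add] at hfinal
  exact hfinal.congr fun n => (hsplit n).symm
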